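/- Suppose ≿ is a complete transitive relation on {a,b}^ℕ (a<b) satisfying Weak Upper Asymptotic Pareto. Let T be an infinite subset of ℕ with blocks I_k(T), and let x(T), y(T) be the alternating streams defined in the paper. If S = T \ {t_1, t_{4k+1}, t_{4k+2} : k ∈ ℕ}, then y(S) ≺ x(T) and y(T) ≺ x(S); hence if x(T) ≺ y(T), then by transitivity y(S) ≺ x(S). -/

import Mathlib

open Filter Topology

noncomputable def upperDensity (S : Set ℕ) : ℝ :=
  Filter.limsup (fun n : ℕ => (Nat.card (↥(S ∩ Set.Icc 1 n)) : ℝ) / (n : ℝ)) Filter.atTop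

/-- Index of the block of the factorial partition determined by the
enumeration `t` (1-indexed) containing `m`: the least k ≥ 1 with m < f(t_k),
so that m ∈ I_k(T) = [f(t_{k-1}), f(t_k)) (with I_1(T) = [0, f(t_1))),
where f(n) = n!. -/
noncomputable def blockIdx (t : ℕ → ℕ) (m : ℕ) : ℕ :=
  sInf {k : ℕ | 1 ≤ k ∧ m < Nat.factorial (t k)}

/-- The stream x(N): value a on blocks with odd index, b on even ones. -/
noncomputable def xStream (a b : ℝ) (t : ℕ → ℕ) (m : ℕ) : ℝ :=
  if Odd (blockIdx t m) then a else b

/-- The stream y(N): value a on I_1(N) and on blocks with even index,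
b on blocks with odd index k > 1. -/
noncomputable def yStream (a b : ℝ) (t : ℕ → ℕ) (m : ℕ) : ℝ :=
  if blockIdx t m = 1 ∨ Even (blockIdx t m) then a else b

/-- Increasing enumeration (1-indexed) of the index set
ℕ \ {1, 4k+1, 4k+2 : k ≥ 1} = {2, 3, 4, 7, 8, 11, 12, ...}, so that the
enumeration of S = T \ {t_1, t_{4k+1}, t_{4k+2} : k ∈ ℕ} is t ∘ subIdx. -/
def subIdx (k : ℕ) : ℕ :=
  if k ≤ 3 then k + 1 else if Even k then 2 * k - 1 else 2 * k - 2

namespace Stmt17Aux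

/-- The map sending the index of a T-block to the index of the S-block
containing it. -/
def hFun (k : ℕ) : ℕ :=
  if k ≤ 2 then 1 else if k % 4 = 0 then k / 2 + 1 else 2 * (k / 4) + 2

lemma subIdx_pos (j : ℕ) : 1 ≤ subIdx j := by
  simp only [subIdx, Nat.even_iff]; split_ifs <;> omega

lemma subIdx_mono : StrictMono subIdx := by
  apply strictMono_nat_of_lt_succ
  intro k
  simp only [subIdx, Nat.even_iff]
  split_ifs <;> omega

lemma hFun_pos (k : ℕ) : 1 ≤ hFun k := by
  simp only [hFun]; split_ifs <;> omega

lemma le_subIdx_hFun (k : ℕ) (hk : 1 ≤ k) : k ≤ subIdx (hFun k) := by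
  simp only [hFun, subIdx, Nat.even_iff]
  split_ifs <;> omega

lemma subIdx_pred_hFun_lt (k : ℕ) (h2 : 2 ≤ hFun k) : subIdx (hFun k - 1) < k := by
  simp only [hFun, subIdx, Nat.even_iff] at h2 ⊢
  split_ifs at h2 ⊢ <;> omega

lemma hFun_eq_one_iff (k : ℕ) (hk : 1 ≤ k) : hFun k = 1 ↔ k ≤ 2 := by
  simp only [hFun]; split_ifs <;> omega

lemma hFun_odd_iff (k : ℕ) (hk : 1 ≤ k) : hFun k % 2 = 1 ↔ (k ≤ 2 ∨ k % 4 = 0) := by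
  simp only [hFun]; split_ifs <;> omega

lemma blockIdx_set_nonempty (t : ℕ → ℕ) (ht : StrictMono t) (m : ℕ) :
    {k : ℕ | 1 ≤ k ∧ m < Nat.factorial (t k)}.Nonempty := by
  refine ⟨m + 1, by omega, ?_⟩
  calc m < m + 1 := Nat.lt_succ_self m
  _ ≤ t (m + 1) := ht.le_apply
  _ ≤ Nat.factorial (t (m + 1)) := Nat.self_le_factorial _

lemma blockIdx_spec (t : ℕ → ℕ) (ht : StrictMono t) (m : ℕ) :
    1 ≤ blockIdx t m ∧ m < Nat.factorial (t (blockIdx t m)) :=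
  Nat.sInf_mem (blockIdx_set_nonempty t ht m)

lemma lt_fact_iff (t : ℕ → ℕ) (ht : StrictMono t) (m i : ℕ) (hi : 1 ≤ i) :
    m < Nat.factorial (t i) ↔ blockIdx t m ≤ i := by
  constructor
  · intro h; exact Nat.sInf_le ⟨hi, h⟩
  · intro h
    obtain ⟨h1, h2⟩ := blockIdx_spec t ht m
    exact lt_of_lt_of_le h2 (Nat.factorial_le (ht.monotone h))

lemma blockIdx_comp (t : ℕ → ℕ) (ht : StrictMono t) (m : ℕ) :
    blockIdx (t ∘ subIdx) m = hFun (blockIdx t m) := by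
  set k := blockIdx t m with hk
  have hk1 : 1 ≤ k := (blockIdx_spec t ht m).1
  have hset : {j : ℕ | 1 ≤ j ∧ m < Nat.factorial ((t ∘ subIdx) j)}
      = {j : ℕ | 1 ≤ j ∧ k ≤ subIdx j} := by
    ext j
    simp only [Set.mem_setOf_eq, Function.comp_apply]
    exact and_congr_right fun hj => lt_fact_iff t ht m (subIdx j) (subIdx_pos j)
  have hmem : hFun k ∈ {j : ℕ | 1 ≤ j ∧ k ≤ subIdx j} :=
    ⟨hFun_pos k, le_subIdx_hFun k hk1⟩
  have hlb : ∀ j ∈ {j : ℕ | 1 ≤ j ∧ k ≤ subIdx j}, hFun k ≤ j := by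
    rintro j ⟨hj1, hjk⟩
    by_contra hcon
    push_neg at hcon
    have h2 : 2 ≤ hFun k := by omega
    have hle : subIdx j ≤ subIdx (hFun k - 1) := subIdx_mono.monotone (by omega)
    have := subIdx_pred_hFun_lt k h2
    omega
  have heq : blockIdx (t ∘ subIdx) m = sInf {j : ℕ | 1 ≤ j ∧ k ≤ subIdx j} := by
    rw [blockIdx, hset]
  rw [heq]
  exact le_antisymm (Nat.sInf_le hmem) (hlb _ (Nat.sInf_mem ⟨_, hmem⟩))

/-- The density-one set: union of the blocks I_{4l+6}(T) = [f(t_{4l+5}), f(t_{4l+6})). -/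
def Dset (t : ℕ → ℕ) : Set ℕ :=
  ⋃ l : ℕ, Set.Ico (Nat.factorial (t (4 * l + 5))) (Nat.factorial (t (4 * l + 6)))

lemma nat_card_Icc (a b : ℕ) : Nat.card (Set.Icc a b) = b + 1 - a := by
  rw [Nat.card_coe_set_eq, ← Finset.coe_Icc, Set.ncard_coe_finset, Nat.card_Icc]

lemma upperDensity_Dset (t : ℕ → ℕ) (ht : StrictMono t) : upperDensity (Dset t) = 1 := by
  set u : ℕ → ℝ := fun n => (Nat.card (↥(Dset t ∩ Set.Icc 1 n)) : ℝ) / (n : ℝ) with hu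
  have hu0 : ∀ n, 0 ≤ u n := fun n => by
    apply div_nonneg <;> positivity
  have hu1 : ∀ n, u n ≤ 1 := by
    intro n
    rcases Nat.eq_zero_or_pos n with h0 | hn
    · simp [hu, h0]
    · have hcard : Nat.card (↥(Dset t ∩ Set.Icc 1 n)) ≤ n := by
        have := Nat.card_mono (Set.finite_Icc 1 n) (Set.inter_subset_right (s := Dset t))
        rwa [nat_card_Icc] at this
      rw [hu]
      have hnpos : (0:ℝ) < n := by exact_mod_cast hn
      rw [div_le_one hnpos]
      exact_mod_cast hcard
  -- lower bound along the subsequence n_l = (t (4l+6))! - 1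
  have hlow : ∀ l : ℕ, 1 - 1 / (4 * (l:ℝ) + 5) ≤ u (Nat.factorial (t (4 * l + 6)) - 1) := by
    intro l
    set A := Nat.factorial (t (4 * l + 5)) with hA
    set B := Nat.factorial (t (4 * l + 6)) with hB
    set M := t (4 * l + 5) with hM
    have hM5 : 4 * l + 5 ≤ M := ht.le_apply
    have hA1 : 1 ≤ A := Nat.factorial_pos _
    have hMA : M ≤ A := Nat.self_le_factorial _
    have hB2 : (M + 1) * A ≤ B := by
      calc (M + 1) * A = Nat.factorial (M + 1) := (Nat.factorial_succ M).symm
      _ ≤ B := Nat.factorial_le (ht (by omega))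
    set n := B - 1 with hn
    have hMA1 : M * A + 1 ≤ B := by
      have h1 : M * A + 1 ≤ M * A + A := by omega
      have h2 : M * A + A = (M + 1) * A := by ring
      omega
    have hnge : M * A ≤ n := by omega
    have hAB : A ≤ B := by nlinarith
    have hB1 : 1 ≤ B := by omega
    have hsub : Set.Icc A n ⊆ Dset t ∩ Set.Icc 1 n := by
      intro x hx
      obtain ⟨hx1, hx2⟩ := hx
      refine ⟨Set.mem_iUnion.mpr ⟨l, ?_⟩, by omega, hx2⟩
      exact ⟨hx1, by omega⟩
    have hcard : B - A ≤ Nat.card (↥(Dset t ∩ Set.Icc 1 n)) := by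
      have := Nat.card_mono ((Set.finite_Icc 1 n).subset Set.inter_subset_right) hsub
      rw [nat_card_Icc] at this
      omega
    -- real estimates
    have hApos : (0:ℝ) < A := by exact_mod_cast hA1
    have hM1 : (1:ℝ) ≤ A := by exact_mod_cast hA1
    have hmR : (4 * (l:ℝ) + 5) ≤ (M:ℝ) := by exact_mod_cast hM5
    have hnR : (M:ℝ) * (A:ℝ) ≤ (n:ℝ) := by exact_mod_cast hnge
    have hnpos : (0:ℝ) < (n:ℝ) := by nlinarith
    have hcastn : ((B:ℝ)) = (n:ℝ) + 1 := by
      have : B = n + 1 := by omega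
      rw [this]; push_cast; ring
    have hcastBA : ((B - A : ℕ) : ℝ) = (B:ℝ) - (A:ℝ) := by
      push_cast [hAB]; ring
    have h45 : (0:ℝ) < 4 * (l:ℝ) + 5 := by positivity
    have h1 : ((A:ℝ) - 1) * (4 * (l:ℝ) + 5) ≤ (n:ℝ) := by nlinarith
    have h2 : (A:ℝ) - 1 ≤ (n:ℝ) / (4 * (l:ℝ) + 5) := (le_div_iff₀ h45).mpr h1
    have key : 1 - 1 / (4 * (l:ℝ) + 5) ≤ ((B - A : ℕ) : ℝ) / (n:ℝ) := by
      rw [hcastBA, hcastn, le_div_iff₀ hnpos]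
      have hexp : (1 - 1 / (4 * (l:ℝ) + 5)) * (n:ℝ)
          = (n:ℝ) - (n:ℝ) / (4 * (l:ℝ) + 5) := by
        field_simp
      rw [hexp]
      linarith
    refine key.trans ?_
    show ((B - A : ℕ) : ℝ) / (n:ℝ) ≤ (Nat.card (↥(Dset t ∩ Set.Icc 1 n)) : ℝ) / (n:ℝ)
    exact (div_le_div_iff_of_pos_right hnpos).mpr (by exact_mod_cast hcard)
  have hbdd : Filter.IsBoundedUnder (· ≤ ·) Filter.atTop u :=
    Filter.isBoundedUnder_of ⟨1, hu1⟩
  have hUD : upperDensity (Dset t) = Filter.limsup u Filter.atTop := rfl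
  have hle : upperDensity (Dset t) ≤ 1 := by
    rw [hUD]
    exact Filter.limsup_le_of_le (Filter.isCoboundedUnder_le_of_le Filter.atTop hu0)
      (Filter.Eventually.of_forall hu1)
  have hge : (1:ℝ) ≤ upperDensity (Dset t) := by
    apply le_of_forall_sub_le
    intro ε hε
    rw [hUD]
    apply Filter.le_limsup_of_frequently_le _ hbdd
    rw [Filter.frequently_atTop]
    intro N
    obtain ⟨l0, hl0⟩ := exists_nat_gt (1 / ε)
    set l := max N l0 with hl
    refine ⟨Nat.factorial (t (4 * l + 6)) - 1, ?_, ?_⟩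
    · have h1 : 4 * l + 6 ≤ t (4 * l + 6) := StrictMono.le_apply ht
      have h2 : t (4 * l + 6) ≤ Nat.factorial (t (4 * l + 6)) := Nat.self_le_factorial _
      have h3 : N ≤ l := le_max_left _ _
      omega
    · refine le_trans ?_ (hlow l)
      have hl0l : (l0 : ℝ) ≤ 4 * (l:ℝ) + 5 := by
        have : l0 ≤ 4 * l + 5 := by
          have := le_max_right N l0
          omega
        exact_mod_cast this
      have h45 : (0:ℝ) < 4 * (l:ℝ) + 5 := by positivity
      have hinv : 1 / (4 * (l:ℝ) + 5) ≤ ε := by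
        rw [div_le_iff₀ h45]
        have h1 : 1 / ε < (l0:ℝ) := hl0
        have h2 : 1 < ε * l0 := by
          rw [div_lt_iff₀ hε] at h1
          linarith
        nlinarith
      linarith
  linarith

/-- Membership of a point of Dset in the block I_{4l+6}. -/
lemma blockIdx_of_mem_Dset (t : ℕ → ℕ) (ht : StrictMono t) {m : ℕ} (hm : m ∈ Dset t) :
    ∃ l : ℕ, blockIdx t m = 4 * l + 6 := by
  obtain ⟨l, hl⟩ := Set.mem_iUnion.mp hm
  obtain ⟨h1, h2⟩ := hl
  refine ⟨l, ?_⟩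
  have hup : blockIdx t m ≤ 4 * l + 6 := (lt_fact_iff t ht m _ (by omega)).mp h2
  have hlo : ¬ blockIdx t m ≤ 4 * l + 5 := by
    intro hcon
    exact absurd ((lt_fact_iff t ht m _ (by omega)).mpr hcon) (by omega)
  omega

lemma yS_le_xT (a b : ℝ) (hab : a ≤ b) (t : ℕ → ℕ) (ht : StrictMono t) (m : ℕ) :
    yStream a b (t ∘ subIdx) m ≤ xStream a b t m := by
  unfold yStream xStream
  rw [blockIdx_comp t ht m]
  have hk1 : 1 ≤ blockIdx t m := (blockIdx_spec t ht m).1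
  split_ifs with h1 h2 h2
  · exact le_refl a
  · exact hab
  · exfalso
    push_neg at h1
    obtain ⟨h1a, h1b⟩ := h1
    rw [Nat.not_even_iff] at h1b
    have hodd : hFun (blockIdx t m) % 2 = 1 := by
      have := hFun_pos (blockIdx t m); omega
    have h24 := (hFun_odd_iff _ hk1).mp hodd
    have hne2 : ¬ blockIdx t m ≤ 2 := fun hcon =>
      h1a ((hFun_eq_one_iff _ hk1).mpr hcon)
    rw [Nat.odd_iff] at h2
    omega
  · exact le_refl b

lemma yT_le_xS (a b : ℝ) (hab : a ≤ b) (t : ℕ → ℕ) (ht : StrictMono t) (m : ℕ) :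
    yStream a b t m ≤ xStream a b (t ∘ subIdx) m := by
  unfold yStream xStream
  rw [blockIdx_comp t ht m]
  have hk1 : 1 ≤ blockIdx t m := (blockIdx_spec t ht m).1
  split_ifs with h1 h2 h2
  · exact le_refl a
  · exact hab
  · exfalso
    push_neg at h1
    obtain ⟨h1a, h1b⟩ := h1
    rw [Nat.not_even_iff] at h1b
    rw [Nat.odd_iff] at h2
    have h24 := (hFun_odd_iff _ hk1).mp h2
    omega
  · exact le_refl b

lemma strict_on_Dset (a b : ℝ) (hab : a < b) (t : ℕ → ℕ) (ht : StrictMono t)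
    {m : ℕ} (hm : m ∈ Dset t) :
    yStream a b (t ∘ subIdx) m < xStream a b t m ∧
    yStream a b t m < xStream a b (t ∘ subIdx) m := by
  obtain ⟨l, hkl⟩ := blockIdx_of_mem_Dset t ht hm
  have hcomp := blockIdx_comp t ht m
  have hk1 : 1 ≤ blockIdx t m := (blockIdx_spec t ht m).1
  have hodd : ¬ Odd (blockIdx t m) := by rw [Nat.odd_iff]; omega
  have heven : Even (blockIdx t m) := by rw [Nat.even_iff]; omega
  have hhodd : ¬ Odd (hFun (blockIdx t m)) := by
    rw [Nat.odd_iff]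
    intro hcon
    have := (hFun_odd_iff _ hk1).mp hcon
    omega
  have hheven : Even (hFun (blockIdx t m)) := Nat.not_odd_iff_even.mp hhodd
  constructor
  · unfold yStream xStream
    rw [hcomp, if_pos (Or.inr hheven), if_neg hodd]
    exact hab
  · unfold yStream xStream
    rw [hcomp, if_pos (Or.inr heven), if_neg hhodd]
    exact hab

end Stmt17Aux

open Stmt17Aux

/-- for a complete transitive relation on {a,b}^ℕ satisfying
Weak Upper Asymptotic Pareto, with T enumerated by `t` and
S = T \ {t_1, t_{4k+1}, t_{4k+2} : k ∈ ℕ} enumerated by `t ∘ subIdx`, one has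
y(S) ≺ x(T) and y(T) ≺ x(S); hence x(T) ≺ y(T) implies y(S) ≺ x(S). -/
theorem stmt_17 (a b : ℝ) (hab : a < b)
    (R : (ℕ → ℝ) → (ℕ → ℝ) → Prop)
    (htotal : ∀ x y : ℕ → ℝ, (∀ i, x i = a ∨ x i = b) → (∀ i, y i = a ∨ y i = b) →
      (R x y ∨ R y x))
    (htrans : ∀ x y z : ℕ → ℝ, (∀ i, x i = a ∨ x i = b) → (∀ i, y i = a ∨ y i = b) →
      (∀ i, z i = a ∨ z i = b) → R x y → R y z → R x z)
    (hWUAP : ∀ x y : ℕ → ℝ, (∀ i, x i = a ∨ x i = b) → (∀ i, y i = a ∨ y i = b) →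
      (∀ i, y i ≤ x i) →
      ∀ S : Set ℕ, upperDensity S = 1 → (∀ i ∈ S, y i < x i) → (R x y ∧ ¬ R y x))
    (t : ℕ → ℕ) (ht : StrictMono t) :
    -- y(S) ≺ x(T)
    (R (xStream a b t) (yStream a b (t ∘ subIdx)) ∧
      ¬ R (yStream a b (t ∘ subIdx)) (xStream a b t)) ∧
    -- y(T) ≺ x(S)
    (R (xStream a b (t ∘ subIdx)) (yStream a b t) ∧
      ¬ R (yStream a b t) (xStream a b (t ∘ subIdx))) ∧
    -- hence x(T) ≺ y(T) → y(S) ≺ x(S)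
    ((R (yStream a b t) (xStream a b t) ∧ ¬ R (xStream a b t) (yStream a b t)) →
      (R (xStream a b (t ∘ subIdx)) (yStream a b (t ∘ subIdx)) ∧
        ¬ R (yStream a b (t ∘ subIdx)) (xStream a b (t ∘ subIdx)))) := by
  have hxT : ∀ i, xStream a b t i = a ∨ xStream a b t i = b := fun i => by
    unfold xStream; split_ifs <;> simp
  have hyT : ∀ i, yStream a b t i = a ∨ yStream a b t i = b := fun i => by
    unfold yStream; split_ifs <;> simp
  have hxS : ∀ i, xStream a b (t ∘ subIdx) i = a ∨ xStream a b (t ∘ subIdx) i = b := fun i => by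
    unfold xStream; split_ifs <;> simp
  have hyS : ∀ i, yStream a b (t ∘ subIdx) i = a ∨ yStream a b (t ∘ subIdx) i = b := fun i => by
    unfold yStream; split_ifs <;> simp
  have hD := upperDensity_Dset t ht
  have h1 : R (xStream a b t) (yStream a b (t ∘ subIdx)) ∧
      ¬ R (yStream a b (t ∘ subIdx)) (xStream a b t) :=
    hWUAP _ _ hxT hyS (fun i => yS_le_xT a b hab.le t ht i) (Dset t) hD
      (fun i hi => (strict_on_Dset a b hab t ht hi).1)
  have h2 : R (xStream a b (t ∘ subIdx)) (yStream a b t) ∧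
      ¬ R (yStream a b t) (xStream a b (t ∘ subIdx)) :=
    hWUAP _ _ hxS hyT (fun i => yT_le_xS a b hab.le t ht i) (Dset t) hD
      (fun i hi => (strict_on_Dset a b hab t ht hi).2)
  refine ⟨h1, h2, ?_⟩
  rintro ⟨hR1, hR2⟩
  constructor
  · have r1 := htrans _ _ _ hxS hyT hxT h2.1 hR1
    exact htrans _ _ _ hxS hxT hyS r1 h1.1
  · intro hcon
    have r1 := htrans _ _ _ hyS hxS hyT hcon h2.1
    have r2 := htrans _ _ _ hyS hyT hxT r1 hR1
    exact h1.2 r2
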